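/- Let N₁, N₂, N₃, N₄ ∈ ℝ³ be unit vectors and j₁,…,j₄ > 0 with Σᵢ jᵢNᵢ = 0, set Xᵢ = jᵢNᵢ, and assume V(X) := det(X₁,X₂,X₃) ≠ 0. Let ℓ¹,…,ℓ⁴ be the dual tetrad vectors and Lⁱʲ = √|V(X)|·(ℓⁱ − ℓʲ) the edge vectors, and set V(L) = det(L¹⁴, L²⁴, L³⁴). Then det( Σᵢ jᵢ (I₃ − Nᵢ Nᵢᵀ) ) = ((j₁+j₂+j₃+j₄)·V(L)² / (j₁j₂j₃j₄)) · ( Σ_{1≤i<k≤4} jᵢ jₖ ‖Lⁱᵏ‖² − V(L)² ). (The determinant of the orbit metric G expressed through the edge lengths and the volume of the tetrahedron.) -/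

import Mathlib

set_option maxHeartbeats 4000000

open Matrix

infixl:74 " ×₃ " => crossProduct

/-- Determinant of the 3×3 matrix with columns `a`, `b`, `c`. -/
noncomputable def det3 (a b c : Fin 3 → ℝ) : ℝ := (Matrix.of ![a, b, c])ᵀ.det

/-- The dual tetrad `ℓⁱ = (1/4V) εⁱʲᵏˡ u_j [X_k, X_l]` (with `u = (1/2)(1,1,1,1)`),
written out via cross products (0-indexed: `ℓ¹ = dualTetrad X 0`, etc.). -/
noncomputable def dualTetrad (X : Fin 4 → Fin 3 → ℝ) : Fin 4 → Fin 3 → ℝ :=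
  (4 * det3 (X 0) (X 1) (X 2))⁻¹ •
    ![(X 1) ×₃ (X 2) + (X 2) ×₃ (X 3) + (X 3) ×₃ (X 1),
      (X 2) ×₃ (X 0) + (X 0) ×₃ (X 3) + (X 3) ×₃ (X 2),
      (X 0) ×₃ (X 1) + (X 1) ×₃ (X 3) + (X 3) ×₃ (X 0),
      (X 1) ×₃ (X 0) + (X 0) ×₃ (X 2) + (X 2) ×₃ (X 1)]

/-- Edge vectors of the tetrahedron: `Lⁱʲ = √|V(X)| (ℓⁱ − ℓʲ)`. -/
noncomputable def edgeVec (X : Fin 4 → Fin 3 → ℝ) (i k : Fin 4) : Fin 3 → ℝ :=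
  Real.sqrt |det3 (X 0) (X 1) (X 2)| • (dualTetrad X i - dualTetrad X k)

/-- The orbit metric `G = Σᵢ jᵢ (I₃ − Nᵢ Nᵢᵀ)`. -/
noncomputable def Gmat (j : Fin 4 → ℝ) (N : Fin 4 → Fin 3 → ℝ) : Matrix (Fin 3) (Fin 3) ℝ :=
  Matrix.of fun a b => ∑ i, j i * ((if a = b then (1 : ℝ) else 0) - N i a * N i b)

private lemma det3_expand' (a b c : Fin 3 → ℝ) :
    det3 a b c = a 0*(b 1*c 2 - b 2*c 1) - b 0*(a 1*c 2 - a 2*c 1) + c 0*(a 1*b 2 - a 2*b 1) := by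
  simp [det3, Matrix.det_fin_three, Matrix.vecHead, Matrix.vecTail]
  ring

/-- The determinant of the orbit metric expressed through the edge lengths `Lⁱᵏ` and the
volume `V(L)` of the tetrahedron:
`det G = ((Σᵢ jᵢ) V(L)² / (j₁j₂j₃j₄)) (Σ_{i<k} jᵢ jₖ ‖Lⁱᵏ‖² − V(L)²)`. -/
theorem det_orbit_metric_via_edges
    (N : Fin 4 → Fin 3 → ℝ) (hN : ∀ i, ∑ x, N i x ^ 2 = 1)
    (j : Fin 4 → ℝ) (hj : ∀ i, 0 < j i)
    (hclo : ∑ i, j i • N i = 0)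
    (X : Fin 4 → Fin 3 → ℝ) (hX : ∀ i, X i = j i • N i)
    (hV : det3 (X 0) (X 1) (X 2) ≠ 0) :
    (Gmat j N).det =
      (∑ i, j i) * det3 (edgeVec X 0 3) (edgeVec X 1 3) (edgeVec X 2 3) ^ 2
          / (j 0 * j 1 * j 2 * j 3) *
        ((∑ i, ∑ k, if i < k then j i * j k * (∑ x, edgeVec X i k x ^ 2) else 0)
          - det3 (edgeVec X 0 3) (edgeVec X 1 3) (edgeVec X 2 3) ^ 2) := by
  have hXc : ∀ i a, X i a = j i * N i a := fun i a => by rw [hX i]; rfl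
  have hs : ∀ a, X 0 a + X 1 a + X 2 a + X 3 a = 0 := by
    intro a
    have h := congrFun hclo a
    simp only [Fin.sum_univ_four, Pi.add_apply, Pi.smul_apply, smul_eq_mul, Pi.zero_apply] at h
    rw [hXc 0 a, hXc 1 a, hXc 2 a, hXc 3 a]
    linarith
  have hXn : ∀ i, X i 0 ^ 2 + X i 1 ^ 2 + X i 2 ^ 2 = j i ^ 2 := by
    intro i
    have h := hN i
    rw [Fin.sum_univ_three] at h
    rw [hXc, hXc, hXc]
    linear_combination (j i ^ 2) * h
  have hX3 : X 3 = -(X 0 + X 1 + X 2) := by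
    funext a
    have := hs a
    simp only [Pi.neg_apply, Pi.add_apply]
    linarith
  set v := det3 (X 0) (X 1) (X 2) with hv
  have hAbs : |v| ≠ 0 := abs_ne_zero.mpr hV
  have hsq : Real.sqrt |v| ^ 2 = |v| := Real.sq_sqrt (abs_nonneg _)
  have habs2 : |v| ^ 2 = v ^ 2 := sq_abs v
  have h4v : (4 * v) ≠ 0 := by positivity
  have fd : det3 (edgeVec X 0 3) (edgeVec X 1 3) (edgeVec X 2 3)
      = (Real.sqrt |v|)^3 * ((4 * v)⁻¹)^3 * (64 * v ^ 2) := by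
    rw [hv]
    simp only [edgeVec, dualTetrad, hX3, cross_apply, Pi.smul_apply, Pi.sub_apply, Pi.add_apply,
      Pi.neg_apply, smul_eq_mul, det3_expand', Matrix.cons_val_zero, Matrix.cons_val_one,
      Matrix.head_cons, Matrix.cons_val_two, Matrix.tail_cons, Matrix.cons_val_three,
      Matrix.cons_val_fin_one, Matrix.head_fin_const]
    ring
  have fact1 : det3 (edgeVec X 0 3) (edgeVec X 1 3) (edgeVec X 2 3) ^ 2 = |v| := by
    rw [fd, show ((Real.sqrt |v|)^3 * ((4 * v)⁻¹)^3 * (64 * v ^ 2))^2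
        = (Real.sqrt |v| ^ 2)^3 * ((4*v)⁻¹)^6 * (4096 * v ^ 4) by ring, hsq]
    field_simp
    linear_combination 4096 * habs2
  have e01 : ∑ x, edgeVec X 0 1 x ^ 2
      = (Real.sqrt |v|)^2 * ((4 * v)⁻¹)^2 * (16 * (∑ x, ((X 2) ×₃ (X 3)) x ^ 2)) := by
    rw [hv]
    simp only [Fin.sum_univ_three, edgeVec, dualTetrad, hX3, cross_apply, Pi.smul_apply,
      Pi.sub_apply, Pi.add_apply, Pi.neg_apply, smul_eq_mul, det3_expand', Matrix.cons_val_zero,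
      Matrix.cons_val_one, Matrix.head_cons, Matrix.cons_val_two, Matrix.tail_cons,
      Matrix.cons_val_three, Matrix.cons_val_fin_one, Matrix.head_fin_const]
    ring
  have h01 : ∑ x, edgeVec X 0 1 x ^ 2 = (∑ x, ((X 2) ×₃ (X 3)) x ^ 2) / |v| := by
    rw [e01, hsq]
    field_simp
    linear_combination (16 * (∑ x, ((X 2) ×₃ (X 3)) x ^ 2)) * habs2
  have e02 : ∑ x, edgeVec X 0 2 x ^ 2
      = (Real.sqrt |v|)^2 * ((4 * v)⁻¹)^2 * (16 * (∑ x, ((X 1) ×₃ (X 3)) x ^ 2)) := by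
    rw [hv]
    simp only [Fin.sum_univ_three, edgeVec, dualTetrad, hX3, cross_apply, Pi.smul_apply,
      Pi.sub_apply, Pi.add_apply, Pi.neg_apply, smul_eq_mul, det3_expand', Matrix.cons_val_zero,
      Matrix.cons_val_one, Matrix.head_cons, Matrix.cons_val_two, Matrix.tail_cons,
      Matrix.cons_val_three, Matrix.cons_val_fin_one, Matrix.head_fin_const]
    ring
  have h02 : ∑ x, edgeVec X 0 2 x ^ 2 = (∑ x, ((X 1) ×₃ (X 3)) x ^ 2) / |v| := by
    rw [e02, hsq]
    field_simp
    linear_combination (16 * (∑ x, ((X 1) ×₃ (X 3)) x ^ 2)) * habs2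
  have e03 : ∑ x, edgeVec X 0 3 x ^ 2
      = (Real.sqrt |v|)^2 * ((4 * v)⁻¹)^2 * (16 * (∑ x, ((X 1) ×₃ (X 2)) x ^ 2)) := by
    rw [hv]
    simp only [Fin.sum_univ_three, edgeVec, dualTetrad, hX3, cross_apply, Pi.smul_apply,
      Pi.sub_apply, Pi.add_apply, Pi.neg_apply, smul_eq_mul, det3_expand', Matrix.cons_val_zero,
      Matrix.cons_val_one, Matrix.head_cons, Matrix.cons_val_two, Matrix.tail_cons,
      Matrix.cons_val_three, Matrix.cons_val_fin_one, Matrix.head_fin_const]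
    ring
  have h03 : ∑ x, edgeVec X 0 3 x ^ 2 = (∑ x, ((X 1) ×₃ (X 2)) x ^ 2) / |v| := by
    rw [e03, hsq]
    field_simp
    linear_combination (16 * (∑ x, ((X 1) ×₃ (X 2)) x ^ 2)) * habs2
  have e12 : ∑ x, edgeVec X 1 2 x ^ 2
      = (Real.sqrt |v|)^2 * ((4 * v)⁻¹)^2 * (16 * (∑ x, ((X 0) ×₃ (X 3)) x ^ 2)) := by
    rw [hv]
    simp only [Fin.sum_univ_three, edgeVec, dualTetrad, hX3, cross_apply, Pi.smul_apply,
      Pi.sub_apply, Pi.add_apply, Pi.neg_apply, smul_eq_mul, det3_expand', Matrix.cons_val_zero,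
      Matrix.cons_val_one, Matrix.head_cons, Matrix.cons_val_two, Matrix.tail_cons,
      Matrix.cons_val_three, Matrix.cons_val_fin_one, Matrix.head_fin_const]
    ring
  have h12 : ∑ x, edgeVec X 1 2 x ^ 2 = (∑ x, ((X 0) ×₃ (X 3)) x ^ 2) / |v| := by
    rw [e12, hsq]
    field_simp
    linear_combination (16 * (∑ x, ((X 0) ×₃ (X 3)) x ^ 2)) * habs2
  have e13 : ∑ x, edgeVec X 1 3 x ^ 2
      = (Real.sqrt |v|)^2 * ((4 * v)⁻¹)^2 * (16 * (∑ x, ((X 2) ×₃ (X 0)) x ^ 2)) := by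
    rw [hv]
    simp only [Fin.sum_univ_three, edgeVec, dualTetrad, hX3, cross_apply, Pi.smul_apply,
      Pi.sub_apply, Pi.add_apply, Pi.neg_apply, smul_eq_mul, det3_expand', Matrix.cons_val_zero,
      Matrix.cons_val_one, Matrix.head_cons, Matrix.cons_val_two, Matrix.tail_cons,
      Matrix.cons_val_three, Matrix.cons_val_fin_one, Matrix.head_fin_const]
    ring
  have h13 : ∑ x, edgeVec X 1 3 x ^ 2 = (∑ x, ((X 2) ×₃ (X 0)) x ^ 2) / |v| := by
    rw [e13, hsq]
    field_simp
    linear_combination (16 * (∑ x, ((X 2) ×₃ (X 0)) x ^ 2)) * habs2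
  have e23 : ∑ x, edgeVec X 2 3 x ^ 2
      = (Real.sqrt |v|)^2 * ((4 * v)⁻¹)^2 * (16 * (∑ x, ((X 0) ×₃ (X 1)) x ^ 2)) := by
    rw [hv]
    simp only [Fin.sum_univ_three, edgeVec, dualTetrad, hX3, cross_apply, Pi.smul_apply,
      Pi.sub_apply, Pi.add_apply, Pi.neg_apply, smul_eq_mul, det3_expand', Matrix.cons_val_zero,
      Matrix.cons_val_one, Matrix.head_cons, Matrix.cons_val_two, Matrix.tail_cons,
      Matrix.cons_val_three, Matrix.cons_val_fin_one, Matrix.head_fin_const]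
    ring
  have h23 : ∑ x, edgeVec X 2 3 x ^ 2 = (∑ x, ((X 0) ×₃ (X 1)) x ^ 2) / |v| := by
    rw [e23, hsq]
    field_simp
    linear_combination (16 * (∑ x, ((X 0) ×₃ (X 1)) x ^ 2)) * habs2
  have hsmul : ((j 0 * j 1 * j 2 * j 3) • Gmat j N) = Matrix.of (fun a b =>
      (j 0 + j 1 + j 2 + j 3) * (j 0 * j 1 * j 2 * j 3) * (if a = b then (1:ℝ) else 0)
      - (j 1 * j 2 * j 3 * (X 0 a * X 0 b) + j 0 * j 2 * j 3 * (X 1 a * X 1 b)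
         + j 0 * j 1 * j 3 * (X 2 a * X 2 b) + j 0 * j 1 * j 2 * (X 3 a * X 3 b))) := by
    ext a b
    simp only [Matrix.smul_apply, Gmat, Matrix.of_apply, Fin.sum_univ_four, smul_eq_mul]
    linear_combination
      (j 1 * j 2 * j 3 * X 0 b) * hXc 0 a + (j 1 * j 2 * j 3 * (j 0 * N 0 a)) * hXc 0 b
      + (j 0 * j 2 * j 3 * X 1 b) * hXc 1 a + (j 0 * j 2 * j 3 * (j 1 * N 1 a)) * hXc 1 b
      + (j 0 * j 1 * j 3 * X 2 b) * hXc 2 a + (j 0 * j 1 * j 3 * (j 2 * N 2 a)) * hXc 2 b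
      + (j 0 * j 1 * j 2 * X 3 b) * hXc 3 a + (j 0 * j 1 * j 2 * (j 3 * N 3 a)) * hXc 3 b
  have hdet : (j 0 * j 1 * j 2 * j 3) ^ 3 * (Gmat j N).det = (Matrix.of (fun a b =>
      (j 0 + j 1 + j 2 + j 3) * (j 0 * j 1 * j 2 * j 3) * (if a = b then (1:ℝ) else 0)
      - (j 1 * j 2 * j 3 * (X 0 a * X 0 b) + j 0 * j 2 * j 3 * (X 1 a * X 1 b)
         + j 0 * j 1 * j 3 * (X 2 a * X 2 b) + j 0 * j 1 * j 2 * (X 3 a * X 3 b)))).det := by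
    rw [← hsmul, Matrix.det_smul]
    norm_num
  have key' : (Matrix.of (fun a b =>
      (j 0 + j 1 + j 2 + j 3) * (j 0 * j 1 * j 2 * j 3) * (if a = b then (1:ℝ) else 0)
      - (j 1 * j 2 * j 3 * (X 0 a * X 0 b) + j 0 * j 2 * j 3 * (X 1 a * X 1 b)
         + j 0 * j 1 * j 3 * (X 2 a * X 2 b) + j 0 * j 1 * j 2 * (X 3 a * X 3 b)))).det
      = (j 0 * j 1 * j 2 * j 3) ^ 2 * ((j 0 + j 1 + j 2 + j 3) *
        ((j 0 * j 1 * (∑ x, ((X 2) ×₃ (X 3)) x ^ 2)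
          + j 0 * j 2 * (∑ x, ((X 1) ×₃ (X 3)) x ^ 2)
          + j 0 * j 3 * (∑ x, ((X 1) ×₃ (X 2)) x ^ 2)
          + j 1 * j 2 * (∑ x, ((X 0) ×₃ (X 3)) x ^ 2)
          + j 1 * j 3 * (∑ x, ((X 2) ×₃ (X 0)) x ^ 2)
          + j 2 * j 3 * (∑ x, ((X 0) ×₃ (X 1)) x ^ 2))
         - v ^ 2)) := by
    rw [hv]
    simp only [Matrix.det_fin_three, Matrix.of_apply, det3_expand', cross_apply,
      Fin.sum_univ_three, Matrix.cons_val_zero, Matrix.cons_val_one, Matrix.head_cons,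
      Matrix.cons_val_two, Matrix.tail_cons, Fin.reduceEq, reduceIte]
    linear_combination
        (-j 0^2*j 1^3*j 2^3*j 3^5 + (-2)*j 0^2*j 1^3*j 2^4*j 3^4 - j 0^2*j 1^3*j 2^5*j 3^3 + (-2)*j 0^2*j 1^4*j 2^3*j 3^4 + (-2)*j 0^2*j 1^4*j 2^4*j 3^3 - j 0^2*j 1^5*j 2^3*j 3^3 + (-2)*j 0^3*j 1^3*j 2^3*j 3^4 + (-2)*j 0^3*j 1^3*j 2^4*j 3^3 + (-2)*j 0^3*j 1^4*j 2^3*j 3^3 - j 0^4*j 1^3*j 2^3*j 3^3) * hXn 0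
        + (-j 0^3*j 1^2*j 2^3*j 3^5 + (-2)*j 0^3*j 1^2*j 2^4*j 3^4 - j 0^3*j 1^2*j 2^5*j 3^3 + (-2)*j 0^3*j 1^3*j 2^3*j 3^4 + (-2)*j 0^3*j 1^3*j 2^4*j 3^3 - j 0^3*j 1^4*j 2^3*j 3^3 + (-2)*j 0^4*j 1^2*j 2^3*j 3^4 + (-2)*j 0^4*j 1^2*j 2^4*j 3^3 + (-2)*j 0^4*j 1^3*j 2^3*j 3^3 - j 0^5*j 1^2*j 2^3*j 3^3) * hXn 1
        + (-j 0^3*j 1^3*j 2^2*j 3^5 + (-2)*j 0^3*j 1^3*j 2^3*j 3^4 - j 0^3*j 1^3*j 2^4*j 3^3 + (-2)*j 0^3*j 1^4*j 2^2*j 3^4 + (-2)*j 0^3*j 1^4*j 2^3*j 3^3 - j 0^3*j 1^5*j 2^2*j 3^3 + (-2)*j 0^4*j 1^3*j 2^2*j 3^4 + (-2)*j 0^4*j 1^3*j 2^3*j 3^3 + (-2)*j 0^4*j 1^4*j 2^2*j 3^3 - j 0^5*j 1^3*j 2^2*j 3^3) * hXn 2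
        + (-j 0^3*j 1^3*j 2^3*j 3^4 + (-2)*j 0^3*j 1^3*j 2^4*j 3^3 - j 0^3*j 1^3*j 2^5*j 3^2 + (-2)*j 0^3*j 1^4*j 2^3*j 3^3 + (-2)*j 0^3*j 1^4*j 2^4*j 3^2 - j 0^3*j 1^5*j 2^3*j 3^2 + (-2)*j 0^4*j 1^3*j 2^3*j 3^3 + (-2)*j 0^4*j 1^3*j 2^4*j 3^2 + (-2)*j 0^4*j 1^4*j 2^3*j 3^2 - j 0^5*j 1^3*j 2^3*j 3^2) * hXn 3
        + (-X 1 2^2*X 2 1^2*X 3 0*j 0^3*j 1^2*j 2^2*j 3^2 + (2)*X 1 2^2*X 2 0*X 2 1*X 3 1*j 0^3*j 1^2*j 2^2*j 3^2 + X 1 2^2*X 2 0*X 2 1^2*j 0^3*j 1^2*j 2^2*j 3^2 + (2)*X 1 1*X 1 2*X 2 1*X 2 2*X 3 0*j 0^3*j 1^2*j 2^2*j 3^2 + (-2)*X 1 1*X 1 2*X 2 0*X 2 2*X 3 1*j 0^3*j 1^2*j 2^2*j 3^2 + (-2)*X 1 1*X 1 2*X 2 0*X 2 1*X 3 2*j 0^3*j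 1^2*j 2^2*j 3^2 + (-2)*X 1 1*X 1 2*X 2 0*X 2 1*X 2 2*j 0^3*j 1^2*j 2^2*j 3^2 - X 1 1^2*X 2 2^2*X 3 0*j 0^3*j 1^2*j 2^2*j 3^2 + (2)*X 1 1^2*X 2 0*X 2 2*X 3 2*j 0^3*j 1^2*j 2^2*j 3^2 + X 1 1^2*X 2 0*X 2 2^2*j 0^3*j 1^2*j 2^2*j 3^2 + (-2)*X 1 0*X 1 2*X 2 1*X 2 2*X 3 1*j 0^3*j 1^2*j 2^2*j 3^2 + (2)*X 1 0*X 1 2*X 2 1^2*X 3 2*j 0^3*j 1^2*j 2^2*j 3^2 + X 1 0*X 1 2^2*X 2 1^2*j 0^3*j 1^2*j 2^2*j 3^2 + (2)*X 1 0*X 1 1*X 2 2^2*X 3 1*j 0^3*j 1^2*j 2^2*j 3^2 + (-2)*X 1 0*X 1 1*X 2 1*X 2 2*X 3 2*j 0^3*j 1^2*j 2^2*j 3^2 + (-2)*X 1 0*X 1 1*X 1 2*X 2 1*X 2 2*j 0^3*j 1^2*j 2^2*j 3^2 + X 1 0*X 1 1^2*X 2 2^2*j 0^3*j 1^2*j 2^2*j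 3^2 - X 0 2^2*X 2 1^2*X 3 0*j 0^2*j 1^3*j 2^2*j 3^2 + (2)*X 0 2^2*X 2 0*X 2 1*X 3 1*j 0^2*j 1^3*j 2^2*j 3^2 + X 0 2^2*X 2 0*X 2 1^2*j 0^2*j 1^3*j 2^2*j 3^2 - X 0 2^2*X 1 1^2*X 3 0*j 0^2*j 1^2*j 2^3*j 3^2 + X 0 2^2*X 1 1^2*X 2 0*j 0^2*j 1^2*j 2^3*j 3^2 + X 0 2^2*X 1 0*X 2 1^2*j 0^2*j 1^3*j 2^2*j 3^2 + (2)*X 0 2^2*X 1 0*X 1 1*X 3 1*j 0^2*j 1^2*j 2^3*j 3^2 + X 0 2^2*X 1 0*X 1 1^2*j 0^2*j 1^2*j 2^3*j 3^2 + (2)*X 0 1*X 0 2*X 2 1*X 2 2*X 3 0*j 0^2*j 1^3*j 2^2*j 3^2 + (-2)*X 0 1*X 0 2*X 2 0*X 2 2*X 3 1*j 0^2*j 1^3*j 2^2*j 3^2 + (-2)*X 0 1*X 0 2*X 2 0*X 2 1*X 3 2*j 0^2*j 1^3*j 2^2*j 3^2 + (-2)*X 0 1*X 0 2*X 2 0*X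 2 1*X 2 2*j 0^2*j 1^3*j 2^2*j 3^2 + (2)*X 0 1*X 0 2*X 1 1*X 1 2*X 3 0*j 0^2*j 1^2*j 2^3*j 3^2 + (-2)*X 0 1*X 0 2*X 1 1*X 1 2*X 2 0*j 0^2*j 1^2*j 2^3*j 3^2 + (-2)*X 0 1*X 0 2*X 1 0*X 2 1*X 2 2*j 0^2*j 1^3*j 2^2*j 3^2 + (-2)*X 0 1*X 0 2*X 1 0*X 1 2*X 3 1*j 0^2*j 1^2*j 2^3*j 3^2 + (-2)*X 0 1*X 0 2*X 1 0*X 1 1*X 3 2*j 0^2*j 1^2*j 2^3*j 3^2 + (-2)*X 0 1*X 0 2*X 1 0*X 1 1*X 1 2*j 0^2*j 1^2*j 2^3*j 3^2 - X 0 1^2*X 2 2^2*X 3 0*j 0^2*j 1^3*j 2^2*j 3^2 + (2)*X 0 1^2*X 2 0*X 2 2*X 3 2*j 0^2*j 1^3*j 2^2*j 3^2 + X 0 1^2*X 2 0*X 2 2^2*j 0^2*j 1^3*j 2^2*j 3^2 - X 0 1^2*X 1 2^2*X 3 0*j 0^2*j 1^2*j 2^3*j 3^2 + X 0 1^2*X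 1 2^2*X 2 0*j 0^2*j 1^2*j 2^3*j 3^2 + X 0 1^2*X 1 0*X 2 2^2*j 0^2*j 1^3*j 2^2*j 3^2 + (2)*X 0 1^2*X 1 0*X 1 2*X 3 2*j 0^2*j 1^2*j 2^3*j 3^2 + X 0 1^2*X 1 0*X 1 2^2*j 0^2*j 1^2*j 2^3*j 3^2 + X 0 0*X 1 2^2*X 2 1^2*j 0^3*j 1^2*j 2^2*j 3^2 + (-2)*X 0 0*X 1 1*X 1 2*X 2 1*X 2 2*j 0^3*j 1^2*j 2^2*j 3^2 + X 0 0*X 1 1^2*X 2 2^2*j 0^3*j 1^2*j 2^2*j 3^2 + (-2)*X 0 0*X 0 2*X 2 1*X 2 2*X 3 1*j 0^2*j 1^3*j 2^2*j 3^2 + (2)*X 0 0*X 0 2*X 2 1^2*X 3 2*j 0^2*j 1^3*j 2^2*j 3^2 + (-2)*X 0 0*X 0 2*X 1 1*X 1 2*X 3 1*j 0^2*j 1^2*j 2^3*j 3^2 + (2)*X 0 0*X 0 2*X 1 1^2*X 3 2*j 0^2*j 1^2*j 2^3*j 3^2 + X 0 0*X 0 2^2*X 2 1^2*j 0^2*j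 1^3*j 2^2*j 3^2 + X 0 0*X 0 2^2*X 1 1^2*j 0^2*j 1^2*j 2^3*j 3^2 + (2)*X 0 0*X 0 1*X 2 2^2*X 3 1*j 0^2*j 1^3*j 2^2*j 3^2 + (-2)*X 0 0*X 0 1*X 2 1*X 2 2*X 3 2*j 0^2*j 1^3*j 2^2*j 3^2 + (2)*X 0 0*X 0 1*X 1 2^2*X 3 1*j 0^2*j 1^2*j 2^3*j 3^2 + (-2)*X 0 0*X 0 1*X 1 1*X 1 2*X 3 2*j 0^2*j 1^2*j 2^3*j 3^2 + (-2)*X 0 0*X 0 1*X 0 2*X 2 1*X 2 2*j 0^2*j 1^3*j 2^2*j 3^2 + (-2)*X 0 0*X 0 1*X 0 2*X 1 1*X 1 2*j 0^2*j 1^2*j 2^3*j 3^2 + X 0 0*X 0 1^2*X 2 2^2*j 0^2*j 1^3*j 2^2*j 3^2 + X 0 0*X 0 1^2*X 1 2^2*j 0^2*j 1^2*j 2^3*j 3^2) * hs 0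
        + (-X 1 2^2*X 2 0^2*X 3 1*j 0^3*j 1^2*j 2^2*j 3^2 - X 1 2^2*X 2 0^2*X 2 1*j 0^3*j 1^2*j 2^2*j 3^2 + (2)*X 1 1*X 1 2*X 2 0^2*X 3 2*j 0^3*j 1^2*j 2^2*j 3^2 + (2)*X 1 1*X 1 2*X 2 0^2*X 2 2*j 0^3*j 1^2*j 2^2*j 3^2 + X 1 1*X 1 2^2*X 2 0^2*j 0^3*j 1^2*j 2^2*j 3^2 + (2)*X 1 0*X 1 2*X 2 0*X 2 2*X 3 1*j 0^3*j 1^2*j 2^2*j 3^2 + (-2)*X 1 0*X 1 2*X 2 0*X 2 1*X 3 2*j 0^3*j 1^2*j 2^2*j 3^2 + (-2)*X 1 0*X 1 2^2*X 2 0*X 2 1*j 0^3*j 1^2*j 2^2*j 3^2 + (-2)*X 1 0*X 1 1*X 2 0*X 2 2*X 3 2*j 0^3*j 1^2*j 2^2*j 3^2 + (-2)*X 1 0*X 1 1*X 2 0*X 2 2^2*j 0^3*j 1^2*j 2^2*j 3^2 - X 1 0^2*X 2 2^2*X 3 1*j 0^3*j 1^2*j 2^2*j 3^2 + (2)*X 1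 0^2*X 2 1*X 2 2*X 3 2*j 0^3*j 1^2*j 2^2*j 3^2 + X 1 0^2*X 2 1*X 2 2^2*j 0^3*j 1^2*j 2^2*j 3^2 + (2)*X 1 0^2*X 1 2*X 2 1*X 2 2*j 0^3*j 1^2*j 2^2*j 3^2 - X 1 0^2*X 1 1*X 2 2^2*j 0^3*j 1^2*j 2^2*j 3^2 - X 0 2^2*X 2 0^2*X 3 1*j 0^2*j 1^3*j 2^2*j 3^2 - X 0 2^2*X 2 0^2*X 2 1*j 0^2*j 1^3*j 2^2*j 3^2 + X 0 2^2*X 1 1*X 2 0^2*j 0^2*j 1^3*j 2^2*j 3^2 + (-2)*X 0 2^2*X 1 0*X 2 0*X 2 1*j 0^2*j 1^3*j 2^2*j 3^2 + (-2)*X 0 2^2*X 1 0*X 1 1*X 2 0*j 0^2*j 1^2*j 2^3*j 3^2 - X 0 2^2*X 1 0^2*X 3 1*j 0^2*j 1^2*j 2^3*j 3^2 + X 0 2^2*X 1 0^2*X 2 1*j 0^2*j 1^2*j 2^3*j 3^2 - X 0 2^2*X 1 0^2*X 1 1*j 0^2*j 1^2*j 2^3*j 3^2 + X 0 1*X 1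 2^2*X 2 0^2*j 0^3*j 1^2*j 2^2*j 3^2 + (-2)*X 0 1*X 1 0*X 1 2*X 2 0*X 2 2*j 0^3*j 1^2*j 2^2*j 3^2 + X 0 1*X 1 0^2*X 2 2^2*j 0^3*j 1^2*j 2^2*j 3^2 + (2)*X 0 1*X 0 2*X 2 0^2*X 3 2*j 0^2*j 1^3*j 2^2*j 3^2 + (2)*X 0 1*X 0 2*X 2 0^2*X 2 2*j 0^2*j 1^3*j 2^2*j 3^2 + (2)*X 0 1*X 0 2*X 1 0*X 2 0*X 2 2*j 0^2*j 1^3*j 2^2*j 3^2 + (2)*X 0 1*X 0 2*X 1 0*X 1 2*X 2 0*j 0^2*j 1^2*j 2^3*j 3^2 + (2)*X 0 1*X 0 2*X 1 0^2*X 3 2*j 0^2*j 1^2*j 2^3*j 3^2 + (2)*X 0 1*X 0 2*X 1 0^2*X 1 2*j 0^2*j 1^2*j 2^3*j 3^2 + X 0 1*X 0 2^2*X 2 0^2*j 0^2*j 1^3*j 2^2*j 3^2 + X 0 1*X 0 2^2*X 1 0^2*j 0^2*j 1^2*j 2^3*j 3^2 + (-2)*X 0 0*X 1 2^2*X 2 0*X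 2 1*j 0^3*j 1^2*j 2^2*j 3^2 + (2)*X 0 0*X 1 1*X 1 2*X 2 0*X 2 2*j 0^3*j 1^2*j 2^2*j 3^2 + (2)*X 0 0*X 1 0*X 1 2*X 2 1*X 2 2*j 0^3*j 1^2*j 2^2*j 3^2 + (-2)*X 0 0*X 1 0*X 1 1*X 2 2^2*j 0^3*j 1^2*j 2^2*j 3^2 + (2)*X 0 0*X 0 2*X 2 0*X 2 2*X 3 1*j 0^2*j 1^3*j 2^2*j 3^2 + (-2)*X 0 0*X 0 2*X 2 0*X 2 1*X 3 2*j 0^2*j 1^3*j 2^2*j 3^2 + (-2)*X 0 0*X 0 2*X 1 1*X 2 0*X 2 2*j 0^2*j 1^3*j 2^2*j 3^2 + (2)*X 0 0*X 0 2*X 1 1*X 1 2*X 2 0*j 0^2*j 1^2*j 2^3*j 3^2 + (2)*X 0 0*X 0 2*X 1 0*X 2 1*X 2 2*j 0^2*j 1^3*j 2^2*j 3^2 + (2)*X 0 0*X 0 2*X 1 0*X 1 2*X 3 1*j 0^2*j 1^2*j 2^3*j 3^2 + (-2)*X 0 0*X 0 2*X 1 0*X 1 2*X 2 1*j 0^2*j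 1^2*j 2^3*j 3^2 + (-2)*X 0 0*X 0 2*X 1 0*X 1 1*X 3 2*j 0^2*j 1^2*j 2^3*j 3^2 + (-2)*X 0 0*X 0 2^2*X 2 0*X 2 1*j 0^2*j 1^3*j 2^2*j 3^2 + (-2)*X 0 0*X 0 2^2*X 1 0*X 1 1*j 0^2*j 1^2*j 2^3*j 3^2 + (-2)*X 0 0*X 0 1*X 2 0*X 2 2*X 3 2*j 0^2*j 1^3*j 2^2*j 3^2 + (-2)*X 0 0*X 0 1*X 2 0*X 2 2^2*j 0^2*j 1^3*j 2^2*j 3^2 + (-2)*X 0 0*X 0 1*X 1 2^2*X 2 0*j 0^2*j 1^2*j 2^3*j 3^2 + (-2)*X 0 0*X 0 1*X 1 0*X 2 2^2*j 0^2*j 1^3*j 2^2*j 3^2 + (-2)*X 0 0*X 0 1*X 1 0*X 1 2*X 3 2*j 0^2*j 1^2*j 2^3*j 3^2 + (-2)*X 0 0*X 0 1*X 1 0*X 1 2^2*j 0^2*j 1^2*j 2^3*j 3^2 - X 0 0^2*X 2 2^2*X 3 1*j 0^2*j 1^3*j 2^2*j 3^2 + (2)*X 0 0^2*X 2 1*X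 2 2*X 3 2*j 0^2*j 1^3*j 2^2*j 3^2 + X 0 0^2*X 2 1*X 2 2^2*j 0^2*j 1^3*j 2^2*j 3^2 - X 0 0^2*X 1 2^2*X 3 1*j 0^2*j 1^2*j 2^3*j 3^2 + X 0 0^2*X 1 2^2*X 2 1*j 0^2*j 1^2*j 2^3*j 3^2 + X 0 0^2*X 1 1*X 2 2^2*j 0^2*j 1^3*j 2^2*j 3^2 + (2)*X 0 0^2*X 1 1*X 1 2*X 3 2*j 0^2*j 1^2*j 2^3*j 3^2 + X 0 0^2*X 1 1*X 1 2^2*j 0^2*j 1^2*j 2^3*j 3^2 + (2)*X 0 0^2*X 0 2*X 2 1*X 2 2*j 0^2*j 1^3*j 2^2*j 3^2 + (2)*X 0 0^2*X 0 2*X 1 1*X 1 2*j 0^2*j 1^2*j 2^3*j 3^2 - X 0 0^2*X 0 1*X 2 2^2*j 0^2*j 1^3*j 2^2*j 3^2 - X 0 0^2*X 0 1*X 1 2^2*j 0^2*j 1^2*j 2^3*j 3^2) * hs 1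
        + (-X 1 1^2*X 2 0^2*X 3 2*j 0^3*j 1^2*j 2^2*j 3^2 - X 1 1^2*X 2 0^2*X 2 2*j 0^3*j 1^2*j 2^2*j 3^2 - X 1 1^2*X 1 2*X 2 0^2*j 0^3*j 1^2*j 2^2*j 3^2 + (2)*X 1 0*X 1 1*X 2 0*X 2 1*X 3 2*j 0^3*j 1^2*j 2^2*j 3^2 + (2)*X 1 0*X 1 1*X 2 0*X 2 1*X 2 2*j 0^3*j 1^2*j 2^2*j 3^2 + (2)*X 1 0*X 1 1*X 1 2*X 2 0*X 2 1*j 0^3*j 1^2*j 2^2*j 3^2 - X 1 0^2*X 2 1^2*X 3 2*j 0^3*j 1^2*j 2^2*j 3^2 - X 1 0^2*X 2 1^2*X 2 2*j 0^3*j 1^2*j 2^2*j 3^2 - X 1 0^2*X 1 2*X 2 1^2*j 0^3*j 1^2*j 2^2*j 3^2 + X 0 2*X 1 1^2*X 2 0^2*j 0^3*j 1^2*j 2^2*j 3^2 + (-2)*X 0 2*X 1 0*X 1 1*X 2 0*X 2 1*j 0^3*j 1^2*j 2^2*j 3^2 + X 0 2*X 1 0^2*X 2 1^2*j 0^3*j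 1^2*j 2^2*j 3^2 + (-2)*X 0 1*X 1 1*X 1 2*X 2 0^2*j 0^3*j 1^2*j 2^2*j 3^2 + (2)*X 0 1*X 1 0*X 1 2*X 2 0*X 2 1*j 0^3*j 1^2*j 2^2*j 3^2 + (2)*X 0 1*X 1 0*X 1 1*X 2 0*X 2 2*j 0^3*j 1^2*j 2^2*j 3^2 + (-2)*X 0 1*X 1 0^2*X 2 1*X 2 2*j 0^3*j 1^2*j 2^2*j 3^2 + (-2)*X 0 1*X 0 2*X 1 1*X 2 0^2*j 0^2*j 1^3*j 2^2*j 3^2 + (2)*X 0 1*X 0 2*X 1 0*X 2 0*X 2 1*j 0^2*j 1^3*j 2^2*j 3^2 + (2)*X 0 1*X 0 2*X 1 0*X 1 1*X 2 0*j 0^2*j 1^2*j 2^3*j 3^2 + (-2)*X 0 1*X 0 2*X 1 0^2*X 2 1*j 0^2*j 1^2*j 2^3*j 3^2 - X 0 1^2*X 2 0^2*X 3 2*j 0^2*j 1^3*j 2^2*j 3^2 - X 0 1^2*X 2 0^2*X 2 2*j 0^2*j 1^3*j 2^2*j 3^2 + X 0 1^2*X 1 2*X 2 0^2*j 0^2*j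 1^3*j 2^2*j 3^2 + (-2)*X 0 1^2*X 1 0*X 2 0*X 2 2*j 0^2*j 1^3*j 2^2*j 3^2 + (-2)*X 0 1^2*X 1 0*X 1 2*X 2 0*j 0^2*j 1^2*j 2^3*j 3^2 - X 0 1^2*X 1 0^2*X 3 2*j 0^2*j 1^2*j 2^3*j 3^2 + X 0 1^2*X 1 0^2*X 2 2*j 0^2*j 1^2*j 2^3*j 3^2 - X 0 1^2*X 1 0^2*X 1 2*j 0^2*j 1^2*j 2^3*j 3^2 - X 0 1^2*X 0 2*X 2 0^2*j 0^2*j 1^3*j 2^2*j 3^2 - X 0 1^2*X 0 2*X 1 0^2*j 0^2*j 1^2*j 2^3*j 3^2 + (2)*X 0 0*X 1 1*X 1 2*X 2 0*X 2 1*j 0^3*j 1^2*j 2^2*j 3^2 + (-2)*X 0 0*X 1 1^2*X 2 0*X 2 2*j 0^3*j 1^2*j 2^2*j 3^2 + (-2)*X 0 0*X 1 0*X 1 2*X 2 1^2*j 0^3*j 1^2*j 2^2*j 3^2 + (2)*X 0 0*X 1 0*X 1 1*X 2 1*X 2 2*j 0^3*j 1^2*j 2^2*j 3^2 + (2)*X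 0 0*X 0 2*X 1 1*X 2 0*X 2 1*j 0^2*j 1^3*j 2^2*j 3^2 + (-2)*X 0 0*X 0 2*X 1 1^2*X 2 0*j 0^2*j 1^2*j 2^3*j 3^2 + (-2)*X 0 0*X 0 2*X 1 0*X 2 1^2*j 0^2*j 1^3*j 2^2*j 3^2 + (2)*X 0 0*X 0 2*X 1 0*X 1 1*X 2 1*j 0^2*j 1^2*j 2^3*j 3^2 + (2)*X 0 0*X 0 1*X 2 0*X 2 1*X 3 2*j 0^2*j 1^3*j 2^2*j 3^2 + (2)*X 0 0*X 0 1*X 2 0*X 2 1*X 2 2*j 0^2*j 1^3*j 2^2*j 3^2 + (-2)*X 0 0*X 0 1*X 1 2*X 2 0*X 2 1*j 0^2*j 1^3*j 2^2*j 3^2 + (2)*X 0 0*X 0 1*X 1 1*X 2 0*X 2 2*j 0^2*j 1^3*j 2^2*j 3^2 + (2)*X 0 0*X 0 1*X 1 1*X 1 2*X 2 0*j 0^2*j 1^2*j 2^3*j 3^2 + (2)*X 0 0*X 0 1*X 1 0*X 2 1*X 2 2*j 0^2*j 1^3*j 2^2*j 3^2 + (2)*X 0 0*X 0 1*X 1 0*X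 1 2*X 2 1*j 0^2*j 1^2*j 2^3*j 3^2 + (2)*X 0 0*X 0 1*X 1 0*X 1 1*X 3 2*j 0^2*j 1^2*j 2^3*j 3^2 + (-2)*X 0 0*X 0 1*X 1 0*X 1 1*X 2 2*j 0^2*j 1^2*j 2^3*j 3^2 + (2)*X 0 0*X 0 1*X 1 0*X 1 1*X 1 2*j 0^2*j 1^2*j 2^3*j 3^2 + (2)*X 0 0*X 0 1*X 0 2*X 2 0*X 2 1*j 0^2*j 1^3*j 2^2*j 3^2 + (2)*X 0 0*X 0 1*X 0 2*X 1 0*X 1 1*j 0^2*j 1^2*j 2^3*j 3^2 - X 0 0^2*X 2 1^2*X 3 2*j 0^2*j 1^3*j 2^2*j 3^2 - X 0 0^2*X 2 1^2*X 2 2*j 0^2*j 1^3*j 2^2*j 3^2 + X 0 0^2*X 1 2*X 2 1^2*j 0^2*j 1^3*j 2^2*j 3^2 + (-2)*X 0 0^2*X 1 1*X 2 1*X 2 2*j 0^2*j 1^3*j 2^2*j 3^2 + (-2)*X 0 0^2*X 1 1*X 1 2*X 2 1*j 0^2*j 1^2*j 2^3*j 3^2 - X 0 0^2*X 1 1^2*X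 3 2*j 0^2*j 1^2*j 2^3*j 3^2 + X 0 0^2*X 1 1^2*X 2 2*j 0^2*j 1^2*j 2^3*j 3^2 - X 0 0^2*X 1 1^2*X 1 2*j 0^2*j 1^2*j 2^3*j 3^2 - X 0 0^2*X 0 2*X 2 1^2*j 0^2*j 1^3*j 2^2*j 3^2 - X 0 0^2*X 0 2*X 1 1^2*j 0^2*j 1^2*j 2^3*j 3^2) * hs 2
  have hP4 : (j 0 * j 1 * j 2 * j 3) ≠ 0 :=
    (mul_pos (mul_pos (mul_pos (hj 0) (hj 1)) (hj 2)) (hj 3)).ne'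
  have key : (Gmat j N).det * (j 0 * j 1 * j 2 * j 3) =
      (j 0 + j 1 + j 2 + j 3) *
        ((j 0 * j 1 * (∑ x, ((X 2) ×₃ (X 3)) x ^ 2)
          + j 0 * j 2 * (∑ x, ((X 1) ×₃ (X 3)) x ^ 2)
          + j 0 * j 3 * (∑ x, ((X 1) ×₃ (X 2)) x ^ 2)
          + j 1 * j 2 * (∑ x, ((X 0) ×₃ (X 3)) x ^ 2)
          + j 1 * j 3 * (∑ x, ((X 2) ×₃ (X 0)) x ^ 2)
          + j 2 * j 3 * (∑ x, ((X 0) ×₃ (X 1)) x ^ 2))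
         - v ^ 2) := by
    apply mul_left_cancel₀ (pow_ne_zero 2 hP4)
    linear_combination hdet + key'
  -- endgame
  rw [fact1, Fin.sum_univ_four, show (∑ i, ∑ k, if i < k then j i * j k * (∑ x, edgeVec X i k x ^ 2) else 0)
      = j 0 * j 1 * (∑ x, edgeVec X 0 1 x ^ 2) + j 0 * j 2 * (∑ x, edgeVec X 0 2 x ^ 2)
        + j 0 * j 3 * (∑ x, edgeVec X 0 3 x ^ 2) + j 1 * j 2 * (∑ x, edgeVec X 1 2 x ^ 2)
        + j 1 * j 3 * (∑ x, edgeVec X 1 3 x ^ 2) + j 2 * j 3 * (∑ x, edgeVec X 2 3 x ^ 2) by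
      simp only [Fin.sum_univ_four, Fin.reduceLT, Fin.reduceEq, reduceIte]
      ring,
    h01, h02, h03, h12, h13, h23]
  have hj0 : j 0 ≠ 0 := (hj 0).ne'
  have hj1 : j 1 ≠ 0 := (hj 1).ne'
  have hj2 : j 2 ≠ 0 := (hj 2).ne'
  have hj3 : j 3 ≠ 0 := (hj 3).ne'
  rw [eq_div_of_mul_eq hP4 key]
  field_simp
  linear_combination (j 0 + j 1 + j 2 + j 3) * habs2
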